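/- For W geometric with parameter c ∈ (0,1) and q ∈ (0,1), the quantity R_{q,w} = Σ_{s=w}^∞ C(s,w)^2 (1-q)^{2(s-w)} q^{-2s} f_{W_q}(s), where f_{W_q}(s) = (c_q/c)c_q^{s-1}(1-c_q) for s ≥ 1 and c_q = qc/(1 - c(1-q)), is finite if and only if c < q/(1-q). -/

import Mathlib

lemma aux_summable_choose (w : ℕ) (x : ℝ) (hx : 0 < x) :
    Summable (fun k : ℕ => (((w + k).choose w : ℝ)) ^ 2 * x ^ k) ↔ x < 1 := by
  constructor
  · intro h
    have hs : Summable (fun k : ℕ => x ^ k) := by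
      refine Summable.of_nonneg_of_le (fun k => (pow_pos hx k).le) (fun k => ?_) h
      have h1 : (1:ℝ) ≤ (((w + k).choose w : ℝ)) ^ 2 := by
        have : 1 ≤ (w + k).choose w := Nat.choose_pos (Nat.le_add_right w k)
        have : (1:ℝ) ≤ ((w + k).choose w : ℝ) := by exact_mod_cast this
        nlinarith
      exact le_mul_of_one_le_left (pow_pos hx k).le h1
    have := summable_geometric_iff_norm_lt_one.mp hs
    rwa [Real.norm_eq_abs, abs_of_pos hx] at this
  · intro hx1
    have h1 : Summable (fun n : ℕ => (n : ℝ) ^ (2 * w) * x ^ n) :=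
      summable_pow_mul_geometric_of_norm_lt_one (2 * w)
        (by rwa [Real.norm_eq_abs, abs_of_pos hx])
    have h2 : Summable (fun k : ℕ => ((w + k : ℕ) : ℝ) ^ (2 * w) * x ^ (w + k)) :=
      h1.comp_injective (add_right_injective w)
    have h3 : Summable (fun k : ℕ => ((w + k : ℕ) : ℝ) ^ (2 * w) * x ^ k) := by
      refine (h2.mul_left ((x ^ w)⁻¹)).congr (fun k => ?_)
      have hxw : (x : ℝ) ^ w ≠ 0 := (pow_pos hx w).ne'
      field_simp [pow_add]
      ring
    refine h3.of_nonneg_of_le (fun k => by positivity) (fun k => ?_)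
    have hch : (((w + k).choose w : ℝ)) ≤ ((w + k : ℕ) : ℝ) ^ w := by
      exact_mod_cast Nat.choose_le_pow (w + k) w
    have hnn : (0:ℝ) ≤ ((w + k).choose w : ℝ) := by positivity
    have : (((w + k).choose w : ℝ)) ^ 2 ≤ (((w + k : ℕ) : ℝ) ^ w) ^ 2 := by
      exact pow_le_pow_left₀ hnn hch 2
    calc (((w + k).choose w : ℝ)) ^ 2 * x ^ k
        ≤ (((w + k : ℕ) : ℝ) ^ w) ^ 2 * x ^ k :=
          mul_le_mul_of_nonneg_right this (pow_pos hx k).le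
      _ = ((w + k : ℕ) : ℝ) ^ (2 * w) * x ^ k := by rw [← pow_mul]; ring_nf

/-- For `W` geometric with parameter `c` thinned with retention probability `q`, the series
`R_{q,w} = Σ_{s=w}^∞ C(s,w)^2 (1-q)^(2(s-w)) q^(-2s) f_{W_q}(s)`, with
`f_{W_q}(s) = (c_q/c)c_q^(s-1)(1-c_q)` and `c_q = qc/(1-c(1-q))`, converges
if and only if `c < q/(1-q)`. -/
theorem stmt6 (c q : ℝ) (hc : c ∈ Set.Ioo (0:ℝ) 1) (hq : q ∈ Set.Ioo (0:ℝ) 1)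
    (w : ℕ) (hw : 1 ≤ w) (c_q : ℝ) (hcq : c_q = q * c / (1 - c * (1 - q))) :
    Summable (fun k : ℕ =>
      (((w + k).choose w : ℝ)) ^ 2 * (1 - q) ^ (2 * k) / q ^ (2 * (w + k))
        * ((c_q / c) * c_q ^ (w + k - 1) * (1 - c_q)))
      ↔ c < q / (1 - q) := by
  obtain ⟨hc0, hc1⟩ := hc
  obtain ⟨hq0, hq1⟩ := hq
  have hq1' : (0:ℝ) < 1 - q := by linarith
  have hd : (0:ℝ) < 1 - c * (1 - q) := by nlinarith
  have hcq0 : 0 < c_q := by rw [hcq]; positivity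
  have hcq1 : c_q < 1 := by
    rw [hcq, div_lt_one hd]; nlinarith
  set x : ℝ := (1 - q) ^ 2 * c_q / q ^ 2 with hx
  have hx0 : 0 < x := by positivity
  set K : ℝ := (c_q / c) * c_q ^ (w - 1) * (1 - c_q) / q ^ (2 * w) with hK
  have hK0 : 0 < K := by
    have : 0 < 1 - c_q := by linarith
    positivity
  have hterm : ∀ k : ℕ,
      (((w + k).choose w : ℝ)) ^ 2 * (1 - q) ^ (2 * k) / q ^ (2 * (w + k))
        * ((c_q / c) * c_q ^ (w + k - 1) * (1 - c_q))
      = K * ((((w + k).choose w : ℝ)) ^ 2 * x ^ k) := by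
    intro k
    have he : w + k - 1 = (w - 1) + k := by omega
    rw [hK, hx, he, pow_add c_q, div_pow, mul_pow, ← pow_mul, ← pow_mul]
    have hq0' : (q:ℝ) ≠ 0 := ne_of_gt hq0
    rw [mul_add 2 w k, pow_add q]
    field_simp
  rw [show (fun k : ℕ =>
      (((w + k).choose w : ℝ)) ^ 2 * (1 - q) ^ (2 * k) / q ^ (2 * (w + k))
        * ((c_q / c) * c_q ^ (w + k - 1) * (1 - c_q)))
      = (fun k : ℕ => K * ((((w + k).choose w : ℝ)) ^ 2 * x ^ k)) from funext hterm]
  rw [summable_mul_left_iff hK0.ne', aux_summable_choose w x hx0]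
  rw [hx, hcq]
  rw [div_lt_one (by positivity), lt_div_iff₀ hq1',
    show (1 - q) ^ 2 * (q * c / (1 - c * (1 - q))) = (1 - q) ^ 2 * (q * c) / (1 - c * (1 - q))
      from (mul_div_assoc _ _ _).symm,
    div_lt_iff₀ hd]
  constructor
  · intro h; nlinarith
  · intro h; nlinarith
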